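/- Let G be a graph with a fractional (2−ε)-arborization φ, and let x, y be two (not necessarily adjacent) vertices of G. Then the Lebesgue measure of the union over all paths P from x to y in G of ⋂_{u∈V(P)} φ(u) is at most 1 − ε, provided there is a vertex v adjacent to both x and y with φ(v) disjoint from each such intersection. -/

import Mathlib

open MeasureTheory

variable {V : Type*}

/-- `φ` is a fractional `k`-arborization of `G`: each vertex gets a measurable subset of
`(0, k)` of Lebesgue measure one, and every level set induces a forest. -/
def FracArb (G : SimpleGraph V) (k : ℝ) (φ : V → Set ℝ) : Prop :=
  (∀ v, MeasurableSet (φ v)) ∧ (∀ v, φ v ⊆ Set.Ioo 0 k) ∧ (∀ v, volume (φ v) = 1) ∧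
    ∀ α : ℝ, (G.induce {v | α ∈ φ v}).IsAcyclic

/-- `G` has a fractional `k`-arborization. -/
def HasFracArb (G : SimpleGraph V) (k : ℝ) : Prop := ∃ φ, FracArb G k φ

/-- The fractional vertex-arboricity of `G`. -/
noncomputable def fva (G : SimpleGraph V) : ℝ := sInf {k : ℝ | 0 < k ∧ HasFracArb G k}

/-- The vertex-arboricity of `G`: least `k` admitting a partition into `k` forests. -/
noncomputable def va (G : SimpleGraph V) : ℕ :=
  sInf {k : ℕ | ∃ c : V → Fin k, ∀ i, (G.induce {v | c v = i}).IsAcyclic}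

/-- The maximum size of a set of vertices inducing a forest in `G`. -/
noncomputable def maxIndForest (G : SimpleGraph V) [Fintype V] : ℕ :=
  sSup {n : ℕ | ∃ S : Finset V, (G.induce (S : Set V)).IsAcyclic ∧ S.card = n}

/-- `H` is a minor of `G` (branch-set formulation). -/
def IsMinor {α : Type*} {β : Type*} (H : SimpleGraph α) (G : SimpleGraph β) : Prop :=
  ∃ f : α → Set β, (∀ a, (f a).Nonempty) ∧ (∀ a, (G.induce (f a)).Connected) ∧
    (Pairwise fun a b => Disjoint (f a) (f b)) ∧
    ∀ a b, H.Adj a b → ∃ x ∈ f a, ∃ y ∈ f b, G.Adj x y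

/-- Planarity, via Wagner's theorem: no `K₅` minor and no `K₃,₃` minor. -/
def Planar (G : SimpleGraph V) : Prop :=
  ¬ IsMinor (SimpleGraph.completeGraph (Fin 5)) G ∧
    ¬ IsMinor (completeBipartiteGraph (Fin 3) (Fin 3)) G

/-- Number of neighbors of `v` of degree at least three. -/
def effDeg (G : SimpleGraph V) [Fintype V] [DecidableRel G.Adj] (v : V) : ℕ :=
  ((G.neighborFinset v).filter fun u => 3 ≤ G.degree u).card

/-- `v` is light: effective degree at most three and degree at most five. -/
def Light (G : SimpleGraph V) [Fintype V] [DecidableRel G.Adj] (v : V) : Prop :=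
  effDeg G v ≤ 3 ∧ G.degree v ≤ 5

/-- `G` is `k`-arborically critical. -/
def ArbCritical (G : SimpleGraph V) (k : ℚ) : Prop :=
  (k : ℝ) < fva G ∧ ∀ H : G.Subgraph, H ≠ ⊤ → fva H.coe ≤ (k : ℝ)

instance (G : SimpleGraph V) [Fintype V] [DecidableRel G.Adj] (v : V) :
    Decidable (Light G v) := inferInstanceAs (Decidable (_ ∧ _))

/-- The measure of the union over paths from `x` to `y` of the intersections of the assigned
sets is at most `1 - ε`, given a common neighbor `v` of `x` and `y` whose set avoids each such
intersection. -/
theorem stmt15 (G : SimpleGraph V) (ε : ℝ) (φ : V → Set ℝ)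
    (hφ : FracArb G (2 - ε) φ) (x y : V)
    (hv : ∃ v : V, G.Adj v x ∧ G.Adj v y ∧
      ∀ p : G.Walk x y, p.IsPath → Disjoint (φ v) (⋂ u ∈ p.support, φ u)) :
    volume (⋃ p : {p : G.Walk x y // p.IsPath}, ⋂ u ∈ (p : G.Walk x y).support, φ u) ≤
      ENNReal.ofReal (1 - ε) := by
  obtain ⟨hmeas, hsub, hvol, -⟩ := hφ
  obtain ⟨v, hvx, hvy, hd⟩ := hv
  set B := ⋃ p : {p : G.Walk x y // p.IsPath}, ⋂ u ∈ (p : G.Walk x y).support, φ u with hB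
  have hdisj : Disjoint (φ v) B :=
    Set.disjoint_iUnion_right.mpr fun p => hd p p.2
  have hBsub : B ⊆ Set.Ioo 0 (2 - ε) :=
    Set.iUnion_subset fun p => fun a ha => by
      simp only [Set.mem_iInter] at ha
      exact hsub x (ha x (p : G.Walk x y).start_mem_support)
  have hsum : volume (φ v) + volume B ≤ volume (Set.Ioo 0 (2 - ε)) := by
    rw [← measure_union' hdisj (hmeas v)]
    exact measure_mono (Set.union_subset (hsub v) hBsub)
  rw [hvol v, Real.volume_Ioo, sub_zero] at hsum
  have h1 : volume B ≤ ENNReal.ofReal (2 - ε) - 1 :=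
    ENNReal.le_sub_of_add_le_left (by simp) hsum
  refine h1.trans ?_
  rw [tsub_le_iff_right]
  calc ENNReal.ofReal (2 - ε) = ENNReal.ofReal ((1 - ε) + 1) := by ring_nf
    _ ≤ ENNReal.ofReal (1 - ε) + ENNReal.ofReal 1 := ENNReal.ofReal_add_le
    _ = ENNReal.ofReal (1 - ε) + 1 := by rw [ENNReal.ofReal_one]
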